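/- Let k ≥ 1 and let P_1 ≤ P_2 ≤ ... ≤ P_k be nonnegative real numbers. Then for every j with 1 ≤ j ≤ k: Σ_{i=j}^k P_i/i ≥ ((H_k − H_{j−1})/H_k) · Σ_{i=1}^k P_i/i, where H_m = Σ_{i=1}^m 1/i and H_0 = 0. -/

import Mathlib

open Finset

lemma stmt9_mono (k : ℕ) (P : ℕ → ℝ)
    (hPmono : ∀ i, 1 ≤ i → i < k → P i ≤ P (i + 1)) :
    ∀ a b, 1 ≤ a → a ≤ b → b ≤ k → P a ≤ P b := by
  intro a b ha hab hbk
  induction b with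
  | zero => omega
  | succ n ih =>
    rcases Nat.lt_or_ge a (n+1) with h | h
    · have h1 : P a ≤ P n := ih (by omega) (by omega)
      exact h1.trans (hPmono n (by omega) (by omega))
    · have : a = n + 1 := by omega
      simp [this]

/-- Let `k ≥ 1` and let `P 1 ≤ P 2 ≤ … ≤ P k` be nonnegative reals. Then for
every `1 ≤ j ≤ k`: `Σ_{i=j}^k P i / i ≥ ((H_k − H_{j−1})/H_k) · Σ_{i=1}^k P i / i`, where
`H_m = Σ_{i=1}^m 1/i` (and `H_0 = 0`). -/
theorem stmt_9 (k : ℕ) (hk : 1 ≤ k) (P : ℕ → ℝ)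
    (hP0 : ∀ i, 1 ≤ i → i ≤ k → 0 ≤ P i)
    (hPmono : ∀ i, 1 ≤ i → i < k → P i ≤ P (i + 1)) :
    ∀ j, 1 ≤ j → j ≤ k →
      ((∑ i ∈ Finset.Icc 1 k, (1 : ℝ) / (i : ℝ)) -
          ∑ i ∈ Finset.Icc 1 (j - 1), (1 : ℝ) / (i : ℝ)) /
          (∑ i ∈ Finset.Icc 1 k, (1 : ℝ) / (i : ℝ)) *
          (∑ i ∈ Finset.Icc 1 k, P i / (i : ℝ))
        ≤ ∑ i ∈ Finset.Icc j k, P i / (i : ℝ) := by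
  intro j hj hjk
  have hmono := stmt9_mono k P hPmono
  -- split sums
  have hsplit : ∀ f : ℕ → ℝ,
      (∑ i ∈ Finset.Icc 1 k, f i)
        = (∑ i ∈ Finset.Icc 1 (j-1), f i) + ∑ i ∈ Finset.Icc j k, f i := by
    intro f
    have h1 : Finset.Icc 1 k = Finset.Ioc 0 k := by
      rw [← Finset.Icc_add_one_left_eq_Ioc]; rfl
    have h2 : Finset.Icc 1 (j-1) = Finset.Ioc 0 (j-1) := by
      rw [← Finset.Icc_add_one_left_eq_Ioc]; rfl
    have h3 : Finset.Icc j k = Finset.Ioc (j-1) k := by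
      rw [← Finset.Icc_add_one_left_eq_Ioc]; congr 1; omega
    rw [h1, h2, h3, ← Finset.sum_Ioc_consecutive f (by omega : 0 ≤ j-1) (by omega : j-1 ≤ k)]
  set A : ℝ := ∑ i ∈ Finset.Icc 1 (j-1), (1 : ℝ) / (i : ℝ) with hA
  set B : ℝ := ∑ i ∈ Finset.Icc j k, (1 : ℝ) / (i : ℝ) with hB
  set head : ℝ := ∑ i ∈ Finset.Icc 1 (j-1), P i / (i : ℝ) with hhead
  set tail : ℝ := ∑ i ∈ Finset.Icc j k, P i / (i : ℝ) with htail
  have hHk : (∑ i ∈ Finset.Icc 1 k, (1 : ℝ) / (i : ℝ)) = A + B := hsplit _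
  have hSk : (∑ i ∈ Finset.Icc 1 k, P i / (i : ℝ)) = head + tail := hsplit _
  rw [hHk, hSk]
  have hA0 : 0 ≤ A := Finset.sum_nonneg fun i hi => by positivity
  have hB0 : 0 < B := by
    apply Finset.sum_pos (fun i hi => ?_) ⟨j, by simp [Finset.mem_Icc]; omega⟩
    simp only [Finset.mem_Icc] at hi
    have : (0:ℝ) < i := by exact_mod_cast (by omega : 0 < i)
    positivity
  have hPj : 0 ≤ P j := hP0 j hj hjk
  have hheadle : head ≤ P j * A := by
    rw [hA, Finset.mul_sum]
    apply Finset.sum_le_sum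
    intro i hi
    simp only [Finset.mem_Icc] at hi
    have hi0 : (0:ℝ) < i := by exact_mod_cast (by omega : 0 < i)
    have : P i ≤ P j := hmono i j (by omega) (by omega) hjk
    rw [div_le_iff₀ hi0, mul_one_div, div_mul_cancel₀ _ (ne_of_gt hi0)]
    exact this
  have htailge : P j * B ≤ tail := by
    rw [hB, Finset.mul_sum]
    apply Finset.sum_le_sum
    intro i hi
    simp only [Finset.mem_Icc] at hi
    have hi0 : (0:ℝ) < i := by exact_mod_cast (by omega : 0 < i)
    have : P j ≤ P i := hmono j i hj hi.1 hi.2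
    rw [mul_one_div, div_le_div_iff₀ hi0 hi0]
    nlinarith
  have hhead0 : 0 ≤ head := by
    apply Finset.sum_nonneg
    intro i hi
    simp only [Finset.mem_Icc] at hi
    have hi0 : (0:ℝ) ≤ i := by positivity
    exact div_nonneg (hP0 i hi.1 (by omega)) hi0
  rw [div_mul_eq_mul_div, div_le_iff₀ (by linarith)]
  ring_nf
  nlinarith [mul_le_mul_of_nonneg_left hheadle hB0.le,
    mul_le_mul_of_nonneg_left htailge hA0]
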